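/- The function λ(b) = (b/2)(2 - b² + sqrt(b⁴ - 4b + 4)) is strictly increasing on [0, 1/d] for every integer d ≥ 2, satisfies λ(0) = 0 and λ(1/d) > 1/d. -/

import Mathlib

private lemma g_pos {x : ℝ} (hx : x ≤ 1/2) : 0 < x ^ 4 - 4 * x + 4 := by
  nlinarith [sq_nonneg (x^2)]

private lemma deriv_pos_aux {x : ℝ} (hx0 : 0 < x) (hx : x < 1/2) :
    0 < 1 / 2 * (2 - x ^ 2 + Real.sqrt (x ^ 4 - 4 * x + 4)) +
      x / 2 * (-(2 * x) + 1 / (2 * Real.sqrt (x ^ 4 - 4 * x + 4)) * (4 * x ^ 3 - 4)) := by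
  set s := Real.sqrt (x ^ 4 - 4 * x + 4) with hs
  have hg : 0 < x ^ 4 - 4 * x + 4 := g_pos hx.le
  have hspos : 0 < s := Real.sqrt_pos.mpr hg
  have hssq : s ^ 2 = x ^ 4 - 4 * x + 4 := Real.sq_sqrt hg.le
  have hE : 0 < (2 - 3 * x ^ 2) * s + s ^ 2 + 2 * x ^ 4 - 2 * x := by
    nlinarith [mul_nonneg (by nlinarith : (0:ℝ) ≤ 2 - 3 * x ^ 2) hspos.le]
  have heq : 1 / 2 * (2 - x ^ 2 + s) +
      x / 2 * (-(2 * x) + 1 / (2 * s) * (4 * x ^ 3 - 4)) =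
      ((2 - 3 * x ^ 2) * s + s ^ 2 + 2 * x ^ 4 - 2 * x) / (2 * s) := by
    field_simp
    ring
  rw [heq]
  positivity

theorem stmt10 (d : ℕ) (hd : 2 ≤ d) :
    StrictMonoOn (fun b : ℝ => b / 2 * (2 - b ^ 2 + Real.sqrt (b ^ 4 - 4 * b + 4)))
        (Set.Icc 0 (1 / (d : ℝ))) ∧
      (0 : ℝ) / 2 * (2 - (0 : ℝ) ^ 2 + Real.sqrt ((0 : ℝ) ^ 4 - 4 * 0 + 4)) = 0 ∧
      1 / (d : ℝ) <
        (1 / (d : ℝ)) / 2 * (2 - (1 / (d : ℝ)) ^ 2 +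
          Real.sqrt ((1 / (d : ℝ)) ^ 4 - 4 * (1 / (d : ℝ)) + 4)) := by
  have hd2 : (2:ℝ) ≤ (d:ℝ) := by exact_mod_cast hd
  have hdpos : (0:ℝ) < (d:ℝ) := by linarith
  have hinv : 1 / (d:ℝ) ≤ 1/2 := by
    rw [div_le_div_iff₀ hdpos (by norm_num)]; linarith
  have hinvpos : (0:ℝ) < 1 / (d:ℝ) := by positivity
  refine ⟨?_, by norm_num, ?_⟩
  · apply strictMonoOn_of_deriv_pos (convex_Icc _ _)
    · apply Continuous.continuousOn
      fun_prop
    · intro x hx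
      rw [interior_Icc] at hx
      obtain ⟨hx0, hx1⟩ := hx
      have hxlt : x < 1/2 := lt_of_lt_of_le hx1 hinv
      have hg : 0 < x ^ 4 - 4 * x + 4 := g_pos hxlt.le
      have h3 : HasDerivAt (fun y : ℝ => y ^ 4 - 4 * y + 4) (4 * x ^ 3 - 4) x := by
        have : HasDerivAt (fun y : ℝ => y ^ 4 - 4 * y + 4) _ x := ((hasDerivAt_pow 4 x).sub ((hasDerivAt_id x).const_mul 4)).add_const 4
        convert this using 1
        ring
      have h4 : HasDerivAt (fun y : ℝ => Real.sqrt (y ^ 4 - 4 * y + 4))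
          (1 / (2 * Real.sqrt (x ^ 4 - 4 * x + 4)) * (4 * x ^ 3 - 4)) x :=
        (Real.hasDerivAt_sqrt hg.ne').comp x h3
      have h2 : HasDerivAt (fun y : ℝ => 2 - y ^ 2 + Real.sqrt (y ^ 4 - 4 * y + 4))
          (-(2 * x) + 1 / (2 * Real.sqrt (x ^ 4 - 4 * x + 4)) * (4 * x ^ 3 - 4)) x := by
        refine HasDerivAt.add ?_ h4
        have := ((hasDerivAt_pow 2 x).const_sub 2)
        convert this using 1
        simp
      have h1 : HasDerivAt (fun y : ℝ => y / 2) (1/2) x := by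
        simpa using (hasDerivAt_id x).div_const 2
      have hf : HasDerivAt (fun b : ℝ => b / 2 * (2 - b ^ 2 + Real.sqrt (b ^ 4 - 4 * b + 4)))
          (1 / 2 * (2 - x ^ 2 + Real.sqrt (x ^ 4 - 4 * x + 4)) +
           x / 2 * (-(2 * x) + 1 / (2 * Real.sqrt (x ^ 4 - 4 * x + 4)) * (4 * x ^ 3 - 4))) x :=
        h1.mul h2
      rw [hf.deriv]
      exact deriv_pos_aux hx0 hxlt
  · set b : ℝ := 1 / (d:ℝ) with hb
    have hbpos : 0 < b := hinvpos
    have hb2 : b ≤ 1/2 := hinv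
    have hs : b ^ 2 < Real.sqrt (b ^ 4 - 4 * b + 4) := by
      rw [show b ^ 4 = (b^2)^2 by ring] at *
      rw [Real.lt_sqrt (by positivity)]
      nlinarith
    nlinarith [hs, hbpos, hb2]
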